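/- Let q be a prime with q ≡ 7 or 17 (mod 24) (i.e. q ≡ ±7 (mod 24)). For every complex number s with Re(s) > 1, L(s, λ_q) = ζ(qs) ζ(s) · ∏_p ( 1 + ∑_{m=2}^{q-1} { ((m+1)/q) − (m/q) } · p^{-ms} ), where the product runs over all prime numbers p. -/

import Mathlib

open Filter

/-- `λ_q(n) = (τ(n)/q)` : the Legendre symbol mod `q` of the number of divisors of `n`. -/
noncomputable def lamq (q : ℕ) [Fact q.Prime] (n : ℕ) : ℂ :=
  (legendreSym q (n.divisors.card : ℤ) : ℂ)

open Complex Finset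

namespace LamqAux

variable (q : ℕ) [Fact q.Prime]

lemma legendre_norm_le (a : ℤ) : ‖((legendreSym q a : ℤ) : ℂ)‖ ≤ 1 := by
  rcases eq_or_ne ((a : ZMod q)) 0 with h | h
  · rw [(legendreSym.eq_zero_iff q a).mpr h]; norm_num
  · rcases legendreSym.eq_one_or_neg_one q h with h' | h' <;> rw [h'] <;> norm_num

lemma legendre_periodic (a : ℤ) : legendreSym q (a + q) = legendreSym q a := by
  conv_lhs => rw [legendreSym.mod]
  conv_rhs => rw [legendreSym.mod]
  congr 1
  rw [show a + (q:ℤ) = a + (q:ℤ) * 1 by ring, Int.add_mul_emod_self_left]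

lemma legendre_q : legendreSym q (q : ℤ) = 0 := by
  rw [legendreSym.eq_zero_iff]
  exact_mod_cast ZMod.natCast_self q

lemma legendre_two (hq : q % 24 = 7 ∨ q % 24 = 17) : legendreSym q 2 = 1 := by
  have hq' : q.Prime := Fact.out
  have hq2 : q ≠ 2 := by rintro rfl; revert hq; decide
  have h24 := Nat.mod_mod_of_dvd q (by norm_num : 8 ∣ 24)
  have h8 : q % 8 = 7 ∨ q % 8 = 1 := by omega
  have h2 : ((2 : ℤ) : ZMod q) ≠ 0 := by
    have h : ((2 : ℤ) : ZMod q) = ((2 : ℕ) : ZMod q) := by push_cast; ring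
    rw [h, Ne, ZMod.natCast_eq_zero_iff]
    intro hdvd
    have hle := Nat.le_of_dvd (by norm_num) hdvd
    have h2le := hq'.two_le
    omega
  rw [legendreSym.eq_one_iff q h2]
  have h : ((2 : ℤ) : ZMod q) = (2 : ZMod q) := by push_cast; ring
  rw [h]
  exact (ZMod.exists_sq_eq_two_iff hq2).mpr (by tauto)

lemma local_factor (h2 : legendreSym q 2 = 1) (hq3 : 3 ≤ q) {x : ℂ} (hx : ‖x‖ < 1) :
    ∑' e : ℕ, ((legendreSym q ((e + 1 : ℕ) : ℤ) : ℤ) : ℂ) * x ^ e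
      = (1 - x ^ q)⁻¹ * (1 - x)⁻¹ *
        (1 + ∑ m ∈ Finset.Icc 2 (q - 1),
          ((legendreSym q ((m : ℤ) + 1) - legendreSym q (m : ℤ) : ℤ) : ℂ) * x ^ m) := by
  set χ : ℕ → ℂ := fun k => ((legendreSym q (k : ℤ) : ℤ) : ℂ) with hχ
  set a : ℕ → ℂ := fun e => χ (e + 1) * x ^ e with ha
  have hsum : Summable a := by
    apply Summable.of_norm_bounded (summable_geometric_of_lt_one (norm_nonneg x) hx)
    intro e
    rw [ha, norm_mul, norm_pow]
    exact mul_le_of_le_one_left (pow_nonneg (norm_nonneg x) e) (legendre_norm_le q _)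
  have hx1 : (1 : ℂ) - x ≠ 0 := by
    intro h
    have hx' : x = 1 := by linear_combination -h
    rw [hx'] at hx; norm_num at hx
  have hxq : (1 : ℂ) - x ^ q ≠ 0 := by
    intro h
    have hq' : x ^ q = 1 := by linear_combination -h
    have hlt : ‖x ^ q‖ < 1 := by
      rw [norm_pow]; exact pow_lt_one₀ (norm_nonneg x) hx (by omega)
    rw [hq'] at hlt; norm_num at hlt
  -- Step 1 : periodicity
  have htail : ∑' (i : ℕ), a (i + q) = x ^ q * ∑' e, a e := by
    rw [← tsum_mul_left]
    apply tsum_congr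
    intro e
    show a (e + q) = x ^ q * a e
    simp only [ha, hχ]
    have hper : legendreSym q ((↑(e + q + 1) : ℤ)) = legendreSym q ((↑(e + 1) : ℤ)) := by
      have h := legendre_periodic q (((e + 1 : ℕ) : ℤ))
      rw [show ((↑(e + q + 1) : ℤ)) = ((e + 1 : ℕ) : ℤ) + q by push_cast; ring]
      exact h
    rw [hper, pow_add]; ring
  have hstep1 : (∑ e ∈ range q, a e) + x ^ q * ∑' e, a e = ∑' e, a e := by
    rw [← htail]
    exact Summable.sum_add_tsum_nat_add q hsum
  have hS : ∑' e, a e = (1 - x ^ q)⁻¹ * ∑ e ∈ range q, a e := by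
    have h' : (1 - x ^ q) * ∑' e, a e = ∑ e ∈ range q, a e := by
      linear_combination -hstep1
    rw [← h', inv_mul_cancel_left₀ hxq]
  -- Step 2 : telescoping of the finite sum
  have e1 : ∑ e ∈ range q, a e = 1 + ∑ e ∈ range (q - 1), χ (e + 2) * x ^ (e + 1) := by
    conv_lhs => rw [show q = (q - 1) + 1 by omega, Finset.sum_range_succ']
    rw [add_comm]
    congr 1
    · show a 0 = 1
      simp only [ha, hχ, pow_zero, mul_one]
      rw [show ((0 + 1 : ℕ) : ℤ) = 1 by norm_num, legendreSym.at_one]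
      norm_num
  have e2 : x * ∑ e ∈ range q, a e = ∑ e ∈ range (q - 1), χ (e + 1) * x ^ (e + 1) := by
    rw [Finset.mul_sum]
    conv_lhs => rw [show q = (q - 1) + 1 by omega, Finset.sum_range_succ]
    have hlast : x * a (q - 1) = 0 := by
      have hzero : χ (q - 1 + 1) = 0 := by
        rw [show q - 1 + 1 = q by omega]
        simp only [hχ]
        rw [legendre_q q]
        norm_num
      simp [ha, hzero]
    rw [hlast, add_zero]
    apply sum_congr rfl
    intro e _
    show x * (χ (e + 1) * x ^ e) = χ (e + 1) * x ^ (e + 1)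
    ring
  have e3 : (1 - x) * (∑ e ∈ range q, a e)
      = 1 + ∑ e ∈ range (q - 1), (χ (e + 2) - χ (e + 1)) * x ^ (e + 1) := by
    rw [sub_mul, one_mul, e2, e1, add_sub_assoc]
    congr 1
    rw [← Finset.sum_sub_distrib]
    exact sum_congr rfl fun e _ => (sub_mul _ _ _).symm
  have e4 : ∑ e ∈ range (q - 1), (χ (e + 2) - χ (e + 1)) * x ^ (e + 1)
      = ∑ e ∈ range (q - 2), (χ (e + 3) - χ (e + 2)) * x ^ (e + 2) := by
    conv_lhs => rw [show q - 1 = (q - 2) + 1 by omega, Finset.sum_range_succ']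
    have h0 : (χ (0 + 2) - χ (0 + 1)) * x ^ (0 + 1) = 0 := by
      simp only [hχ]
      rw [show ((0 + 2 : ℕ) : ℤ) = 2 by norm_num, show ((0 + 1 : ℕ) : ℤ) = 1 by norm_num,
        h2, legendreSym.at_one]
      norm_num
    rw [h0, add_zero]
  have e5 : ∑ m ∈ Finset.Icc 2 (q - 1),
        ((legendreSym q ((m : ℤ) + 1) - legendreSym q (m : ℤ) : ℤ) : ℂ) * x ^ m
      = ∑ e ∈ range (q - 2), (χ (e + 3) - χ (e + 2)) * x ^ (e + 2) := by
    rw [show Finset.Icc 2 (q - 1) = Finset.Ico 2 q by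
      rw [← Finset.Ico_add_one_right_eq_Icc]; congr 1; omega]
    rw [Finset.sum_Ico_eq_sum_range]
    apply sum_congr rfl
    intro i _
    simp only [hχ]
    rw [show 2 + i = i + 2 by omega]
    rw [show ((i + 2 : ℕ) : ℤ) + 1 = ((i + 3 : ℕ) : ℤ) by push_cast; ring]
    push_cast
    ring
  have hP : ∑ e ∈ range q, a e = (1 - x)⁻¹ *
      (1 + ∑ m ∈ Finset.Icc 2 (q - 1),
        ((legendreSym q ((m : ℤ) + 1) - legendreSym q (m : ℤ) : ℤ) : ℂ) * x ^ m) := by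
    have hC : (1 - x) * (∑ e ∈ range q, a e)
        = 1 + ∑ m ∈ Finset.Icc 2 (q - 1),
            ((legendreSym q ((m : ℤ) + 1) - legendreSym q (m : ℤ) : ℤ) : ℂ) * x ^ m := by
      rw [e3, e4, e5]
    rw [← hC, inv_mul_cancel_left₀ hx1]
  calc ∑' e, a e = (1 - x ^ q)⁻¹ * ∑ e ∈ range q, a e := hS
    _ = _ := by rw [hP, mul_assoc]

lemma g_bound {x : ℂ} (hx : ‖x‖ < 1 / 2) :
    ‖∑ m ∈ Finset.Icc 2 (q - 1),
        ((legendreSym q ((m : ℤ) + 1) - legendreSym q (m : ℤ) : ℤ) : ℂ) * x ^ m‖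
      ≤ 4 * ‖x‖ ^ 2 := by
  have hx0 : (0 : ℝ) ≤ ‖x‖ := norm_nonneg x
  calc ‖∑ m ∈ Finset.Icc 2 (q - 1),
        ((legendreSym q ((m : ℤ) + 1) - legendreSym q (m : ℤ) : ℤ) : ℂ) * x ^ m‖
      ≤ ∑ m ∈ Finset.Icc 2 (q - 1), 2 * ‖x‖ ^ m := by
        refine (norm_sum_le _ _).trans (Finset.sum_le_sum fun m _ => ?_)
        rw [norm_mul, norm_pow]
        apply mul_le_mul_of_nonneg_right _ (pow_nonneg hx0 m)
        push_cast
        calc ‖((legendreSym q ((m : ℤ) + 1) : ℤ) : ℂ) - ((legendreSym q (m : ℤ) : ℤ) : ℂ)‖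
            ≤ ‖((legendreSym q ((m : ℤ) + 1) : ℤ) : ℂ)‖ + ‖((legendreSym q (m : ℤ) : ℤ) : ℂ)‖ :=
              norm_sub_le _ _
          _ ≤ 2 := by
              have h1 := legendre_norm_le q ((m : ℤ) + 1)
              have h2 := legendre_norm_le q (m : ℤ)
              linarith
    _ ≤ 4 * ‖x‖ ^ 2 := by
        rw [← Finset.mul_sum]
        have key : ∑ m ∈ Finset.Icc 2 (q - 1), ‖x‖ ^ m ≤ ‖x‖ ^ 2 * 2 := by
          rw [show Finset.Icc 2 (q - 1) = Finset.Ico 2 (q - 1 + 1) by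
            rw [Finset.Ico_add_one_right_eq_Icc]]
          rw [Finset.sum_Ico_eq_sum_range]
          have hterm : ∀ i, ‖x‖ ^ (2 + i) = ‖x‖ ^ 2 * ‖x‖ ^ i := fun i => pow_add _ _ _
          rw [Finset.sum_congr rfl fun i _ => hterm i, ← Finset.mul_sum]
          apply mul_le_mul_of_nonneg_left _ (pow_nonneg hx0 2)
          calc ∑ i ∈ range (q - 1 + 1 - 2), ‖x‖ ^ i
              ≤ ∑ i ∈ range (q - 1 + 1 - 2), (1 / 2 : ℝ) ^ i :=
                Finset.sum_le_sum fun i _ => pow_le_pow_left₀ hx0 hx.le i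
            _ ≤ 2 := sum_geometric_two_le _
        nlinarith [key, pow_nonneg hx0 2]

lemma C_ne_zero (hq3 : 3 ≤ q) {x : ℂ} (hx : ‖x‖ < 1 / 2) :
    (1 + ∑ m ∈ Finset.Icc 2 (q - 1),
        ((legendreSym q ((m : ℤ) + 1) - legendreSym q (m : ℤ) : ℤ) : ℂ) * x ^ m) ≠ 0 := by
  intro h
  have hb := g_bound q hx
  have hsum : ∑ m ∈ Finset.Icc 2 (q - 1),
      ((legendreSym q ((m : ℤ) + 1) - legendreSym q (m : ℤ) : ℤ) : ℂ) * x ^ m = -1 := by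
    linear_combination h
  rw [hsum] at hb
  have h1 : ‖(-1 : ℂ)‖ = 1 := by norm_num
  rw [h1] at hb
  nlinarith [norm_nonneg x, hx]

end LamqAux

open LamqAux

theorem dirichlet_series_lamq_pm7_mod24 (q : ℕ) [Fact q.Prime]
    (hq : q % 24 = 7 ∨ q % 24 = 17) (s : ℂ) (hs : 1 < s.re) :
    LSeries (lamq q) s =
      riemannZeta (q * s) * riemannZeta s *
        ∏' p : Nat.Primes,
          (1 + ∑ m ∈ Finset.Icc 2 (q - 1),
            ((legendreSym q ((m : ℤ) + 1) - legendreSym q (m : ℤ) : ℤ) : ℂ) *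
              ((p : ℕ) : ℂ) ^ (-((m : ℂ) * s))) := by
  have hq' : q.Prime := Fact.out
  have hq7 : 7 ≤ q := by
    have := hq'.two_le
    omega
  have h2leg : legendreSym q 2 = 1 := legendre_two q hq
  have hs0 : s ≠ 0 := ne_zero_of_one_lt_re hs
  set x : Nat.Primes → ℂ := fun p => ((p : ℕ) : ℂ) ^ (-s) with hxdef
  have hxnorm : ∀ p : Nat.Primes, ‖x p‖ < 1 / 2 ∧ ‖x p‖ ≤ ((p : ℕ) : ℝ)⁻¹ := by
    intro p
    have hp2 : 2 ≤ (p : ℕ) := p.prop.two_le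
    have hp1 : (1 : ℝ) < ((p : ℕ) : ℝ) := by exact_mod_cast (by omega : 1 < (p : ℕ))
    have hnx : ‖x p‖ = ((p : ℕ) : ℝ) ^ (-s.re) := by
      rw [hxdef]
      simp only
      rw [show (((p : ℕ) : ℂ)) = ((((p : ℕ) : ℝ)) : ℂ) by norm_cast]
      rw [Complex.norm_cpow_eq_rpow_re_of_pos (by positivity), neg_re]
    have hlt : ((p : ℕ) : ℝ) ^ (-s.re) < ((p : ℕ) : ℝ) ^ (-1 : ℝ) :=
      Real.rpow_lt_rpow_of_exponent_lt hp1 (by linarith)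
    rw [Real.rpow_neg_one] at hlt
    have h2p : (2 : ℝ) ≤ ((p : ℕ) : ℝ) := by exact_mod_cast hp2
    have hinv : ((p : ℕ) : ℝ)⁻¹ ≤ (2 : ℝ)⁻¹ := by gcongr
    constructor
    · rw [hnx]
      exact lt_of_lt_of_le hlt (hinv.trans (by norm_num))
    · rw [hnx]; exact hlt.le
  set F : ℕ → ℂ := fun n => LSeries.term (lamq q) s n with hFdef
  have hf0 : F 0 = 0 := LSeries.term_zero _ _
  have hf1 : F 1 = 1 := by
    simp only [hFdef]
    rw [LSeries.term_of_ne_zero one_ne_zero]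
    simp [lamq, Nat.divisors_one, legendreSym.at_one]
  have hnorm_le : ∀ n : ℕ, n ≠ 0 → ‖F n‖ ≤ ((n : ℝ)) ^ (-s.re) := by
    intro n hn
    have hpos : (0 : ℝ) < (n : ℝ) := by positivity
    simp only [hFdef]
    rw [LSeries.term_of_ne_zero hn, norm_div]
    have hden : ‖((n : ℕ) : ℂ) ^ s‖ = (n : ℝ) ^ s.re := by
      rw [show ((n : ℂ)) = (((n : ℝ)) : ℂ) by push_cast; rfl,
        Complex.norm_cpow_eq_rpow_re_of_pos hpos]

    rw [hden, Real.rpow_neg hpos.le, div_eq_mul_inv]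
    exact mul_le_of_le_one_left (by positivity) (legendre_norm_le q _)
  have hsumnorm : Summable fun n => ‖F n‖ := by
    refine Summable.of_nonneg_of_le (fun n => norm_nonneg _) (fun n => ?_)
      (Real.summable_nat_rpow.mpr (by linarith : -s.re < -1))
    rcases eq_or_ne n 0 with rfl | hn
    · rw [hf0, norm_zero]; positivity
    · exact hnorm_le n hn
  have hmul : ∀ {m n : ℕ}, Nat.Coprime m n → F (m * n) = F m * F n := by
    intro m n hmn
    rcases eq_or_ne m 0 with rfl | hm
    · rw [zero_mul, hf0, zero_mul]
    rcases eq_or_ne n 0 with rfl | hn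
    · rw [mul_zero, hf0, mul_zero]
    simp only [hFdef]
    rw [LSeries.term_of_ne_zero (mul_ne_zero hm hn), LSeries.term_of_ne_zero hm,
      LSeries.term_of_ne_zero hn]
    have hcard : (((m * n).divisors.card : ℕ) : ℤ)
        = ((m.divisors.card : ℕ) : ℤ) * ((n.divisors.card : ℕ) : ℤ) := by
      rw_mod_cast [Nat.Coprime.card_divisors_mul hmn]
    have hnum : lamq q (m * n) = lamq q m * lamq q n := by
      simp only [lamq]
      rw [hcard, legendreSym.mul]
      push_cast
      ring
    have hden : ((m * n : ℕ) : ℂ) ^ s = ((m : ℕ) : ℂ) ^ s * ((n : ℕ) : ℂ) ^ s := by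
      simpa only [Nat.cast_mul, ofReal_natCast] using
        mul_cpow_ofReal_nonneg m.cast_nonneg n.cast_nonneg s
    rw [hnum, hden, div_mul_div_comm]
  have hEuler : HasProd (fun p : Nat.Primes => ∑' e : ℕ, F ((p : ℕ) ^ e)) (∑' n, F n) :=
    EulerProduct.eulerProduct_hasProd hf1 hmul hsumnorm hf0
  have hloc : ∀ p : Nat.Primes, ∑' e : ℕ, F ((p : ℕ) ^ e)
      = (1 - (x p) ^ q)⁻¹ * (1 - x p)⁻¹ *
        (1 + ∑ m ∈ Finset.Icc 2 (q - 1),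
          ((legendreSym q ((m : ℤ) + 1) - legendreSym q (m : ℤ) : ℤ) : ℂ) * (x p) ^ m) := by
    intro p
    have hterm : ∀ e : ℕ, F ((p : ℕ) ^ e)
        = ((legendreSym q ((e + 1 : ℕ) : ℤ) : ℤ) : ℂ) * (x p) ^ e := by
      intro e
      have hpe : (p : ℕ) ^ e ≠ 0 := pow_ne_zero _ p.prop.pos.ne'
      simp only [hFdef]
      rw [LSeries.term_of_ne_zero hpe]
      have hcard : (((p : ℕ) ^ e).divisors.card) = e + 1 := by
        rw [← ArithmeticFunction.sigma_zero_apply,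
          ArithmeticFunction.sigma_zero_apply_prime_pow p.prop]
      simp only [lamq]
      rw [hcard]
      rw [div_eq_mul_inv, ← cpow_neg]
      congr 1
      have hmp := map_pow (riemannZetaSummandHom hs0) (p : ℕ) e
      simp only [riemannZetaSummandHom, MonoidWithZeroHom.coe_mk, ZeroHom.coe_mk] at hmp
      simp only [hxdef]
      exact hmp
    rw [tsum_congr hterm]
    exact local_factor q h2leg (by omega) ((hxnorm p).1.trans (by norm_num))
  set g : Nat.Primes → ℂ := fun p => ∑ m ∈ Finset.Icc 2 (q - 1),
      ((legendreSym q ((m : ℤ) + 1) - legendreSym q (m : ℤ) : ℤ) : ℂ) * (x p) ^ m with hgdef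
  have hgbound : ∀ p : Nat.Primes, ‖g p‖ ≤ 4 * ‖x p‖ ^ 2 := fun p => g_bound q (hxnorm p).1
  have hmulti : Multipliable (fun p : Nat.Primes => 1 + g p) := by
    have hgs : Summable fun p => ‖g p‖ := by
      have hsum2 : Summable (fun p : Nat.Primes => 4 * (((p : ℕ) : ℝ)⁻¹ * ((p : ℕ) : ℝ)⁻¹)) := by
        have h1 : Summable (fun n : ℕ => 1 / (n : ℝ) ^ (2 : ℕ)) :=
          Real.summable_one_div_nat_pow.mpr one_lt_two
        have h0 : Summable (fun n : ℕ => 4 * ((n : ℝ)⁻¹ * (n : ℝ)⁻¹)) :=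
          (h1.mul_left 4).congr fun n => by ring
        exact h0.subtype _
      refine Summable.of_nonneg_of_le (fun p => norm_nonneg _) (fun p => ?_) hsum2
      refine (hgbound p).trans ?_
      have h1 := (hxnorm p).2
      have h0 := norm_nonneg (x p)
      nlinarith [mul_self_le_mul_self h0 h1]
    have hne : ∀ p : Nat.Primes, 1 + g p ≠ 0 := fun p => C_ne_zero q (by omega) (hxnorm p).1
    have hlog : Summable fun p => Complex.log (1 + g p) := by
      have hev : ∀ᶠ p in Filter.cofinite, ‖g p‖ ≤ 1 / 2 := by
        have ht := hgs.tendsto_cofinite_zero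
        filter_upwards [ht.eventually (eventually_le_nhds (by norm_num : (0 : ℝ) < 1 / 2))]
          with p hp
        exact hp
      refine Summable.of_norm_bounded_eventually (g := fun p => 3 / 2 * ‖g p‖) (hgs.mul_left _) ?_
      filter_upwards [hev] with p hp
      exact Complex.norm_log_one_add_half_le_self hp
    exact Complex.multipliable_of_summable_log hlog
  have hqs : 1 < ((q : ℂ) * s).re := by
    have hre : ((q : ℂ) * s).re = (q : ℝ) * s.re := by
      simp [Complex.mul_re]
    rw [hre]
    have h2q : (2 : ℝ) ≤ (q : ℝ) := by exact_mod_cast hq'.two_le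
    nlinarith
  have hA := riemannZeta_eulerProduct_hasProd hqs
  have hB := riemannZeta_eulerProduct_hasProd hs
  have hA' : HasProd (fun p : Nat.Primes => (1 - (x p) ^ q)⁻¹) (riemannZeta ((q : ℂ) * s)) := by
    have heq : (fun p : Nat.Primes => (1 - (p : ℂ) ^ (-((q : ℂ) * s)))⁻¹)
        = fun p : Nat.Primes => (1 - (x p) ^ q)⁻¹ := by
      funext p
      simp only [hxdef]
      rw [show -((q : ℂ) * s) = ((q : ℕ) : ℂ) * (-s) by push_cast; ring, Complex.cpow_nat_mul]
    rw [← heq]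
    exact hA
  have hB' : HasProd (fun p : Nat.Primes => (1 - x p)⁻¹) (riemannZeta s) := hB
  have htotal : HasProd (fun p : Nat.Primes => (1 - (x p) ^ q)⁻¹ * (1 - x p)⁻¹ * (1 + g p))
      (riemannZeta ((q : ℂ) * s) * riemannZeta s * ∏' p, (1 + g p)) :=
    (hA'.mul hB').mul hmulti.hasProd
  have h1 : HasProd (fun p : Nat.Primes => (1 - (x p) ^ q)⁻¹ * (1 - x p)⁻¹ * (1 + g p))
      (LSeries (lamq q) s) := by
    have hLs : LSeries (lamq q) s = ∑' n, F n := rfl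
    rw [hLs]
    have hfun : (fun p : Nat.Primes => ∑' e : ℕ, F ((p : ℕ) ^ e))
        = fun p : Nat.Primes => (1 - (x p) ^ q)⁻¹ * (1 - x p)⁻¹ * (1 + g p) := by
      funext p
      rw [hloc p, hgdef]
    exact hfun ▸ hEuler
  have hLS : LSeries (lamq q) s
      = riemannZeta ((q : ℂ) * s) * riemannZeta s * ∏' p, (1 + g p) := h1.unique htotal
  rw [hLS]
  congr 1
  apply tprod_congr
  intro p
  simp only [hgdef]
  congr 1
  apply Finset.sum_congr rfl
  intro m _
  congr 1
  simp only [hxdef]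
  rw [show -((m : ℂ) * s) = ((m : ℕ) : ℂ) * (-s) by push_cast; ring, Complex.cpow_nat_mul]
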